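/- Self-attention f with parameters (A, V) is Lipschitz on B_R^n (with the Frobenius norm) with Lip(f|_{B_R^n}) ≤ √3 ‖V‖₂ (‖A‖₂² R⁴ (4n + 1) + n)^{1/2}. -/

import Mathlib

open Matrix

/-- Self-attention as a map between sequence spaces equipped with the Frobenius norm. -/
noncomputable def attnF (n d k : ℕ) (A : Matrix (Fin d) (Fin d) ℝ)
    (V : Matrix (Fin k) (Fin d) ℝ) :
    PiLp 2 (fun _ : Fin n => EuclideanSpace ℝ (Fin d)) →
      PiLp 2 (fun _ : Fin n => EuclideanSpace ℝ (Fin k)) :=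
  fun x => WithLp.toLp 2 (fun i => WithLp.toLp 2 (V.mulVec (∑ j, (Real.exp ((x i) ⬝ᵥ (Aᵀ.mulVec (x j))) /
      ∑ l, Real.exp ((x i) ⬝ᵥ (Aᵀ.mulVec (x l)))) • x j)))

/-- Spectral norm of a matrix, as the operator norm of the induced map between
Euclidean spaces. -/
noncomputable def spec {a b : ℕ} (M : Matrix (Fin a) (Fin b) ℝ) : ℝ :=
  ‖LinearMap.toContinuousLinearMap (Matrix.toEuclideanLin M)‖

section Aux

open Finset

/-- Softmax of a vector of scores. -/
noncomputable def smax {n : ℕ} (a : Fin n → ℝ) (j : Fin n) : ℝ :=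
  Real.exp (a j) / ∑ l, Real.exp (a l)

/-- The identity map into Euclidean space, used to pin down norm instances. -/
def toE {d : ℕ} (v : Fin d → ℝ) : EuclideanSpace ℝ (Fin d) := WithLp.toLp 2 v

variable {n d : ℕ}

lemma sumexp_pos [Nonempty (Fin n)] (a : Fin n → ℝ) : 0 < ∑ l, Real.exp (a l) :=
  Finset.sum_pos (fun _ _ => Real.exp_pos _) Finset.univ_nonempty

lemma smax_nonneg [Nonempty (Fin n)] (a : Fin n → ℝ) (j : Fin n) : 0 ≤ smax a j :=
  div_nonneg (Real.exp_pos _).le (sumexp_pos a).le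

lemma sum_smax [Nonempty (Fin n)] (a : Fin n → ℝ) : ∑ j, smax a j = 1 := by
  unfold smax; rw [← Finset.sum_div]; exact div_self (sumexp_pos a).ne'

lemma smax_le_one [Nonempty (Fin n)] (a : Fin n → ℝ) (j : Fin n) : smax a j ≤ 1 := by
  rw [smax, div_le_one (sumexp_pos a)]
  exact Finset.single_le_sum (fun l _ => (Real.exp_pos _).le) (Finset.mem_univ j)

lemma smax_eq_mul_exp [Nonempty (Fin n)] (a b : Fin n → ℝ) (j : Fin n) :
    smax a j = smax b j * Real.exp ((a j - b j) -
      Real.log ((∑ l, Real.exp (a l)) / (∑ l, Real.exp (b l)))) := by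
  have hZa := sumexp_pos a
  have hZb := sumexp_pos b
  have h1 : Real.exp (b j) ≠ 0 := Real.exp_ne_zero _
  rw [smax, smax, Real.exp_sub, Real.exp_log (div_pos hZa hZb), Real.exp_sub]
  field_simp

/-- The key softmax estimate: the `ℓ¹` distance between two softmax vectors is at most
`√2` times the `ℓ²` distance of the scores. -/
lemma gibbs_sum [Nonempty (Fin n)] (a b : Fin n → ℝ) :
    ∑ j, |smax a j - smax b j| ≤
      Real.sqrt 2 * Real.sqrt (∑ j, (a j - b j) ^ 2) := by
  have hZa := sumexp_pos a
  have hZb := sumexp_pos b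
  set c := Real.log ((∑ l, Real.exp (a l)) / (∑ l, Real.exp (b l))) with hcdef
  obtain ⟨j0, -, hj0⟩ := Finset.exists_max_image Finset.univ (fun j => a j - b j)
    Finset.univ_nonempty
  obtain ⟨j1, -, hj1⟩ := Finset.exists_min_image Finset.univ (fun j => a j - b j)
    Finset.univ_nonempty
  simp only [Finset.mem_univ, forall_const] at hj0 hj1
  have hc_le : c ≤ a j0 - b j0 := by
    rw [hcdef, Real.log_le_iff_le_exp (div_pos hZa hZb), div_le_iff₀ hZb]
    rw [Finset.mul_sum]
    apply Finset.sum_le_sum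
    intro l _
    rw [← Real.exp_add]
    exact Real.exp_le_exp.2 (by have := hj0 l; linarith)
  have hle_c : a j1 - b j1 ≤ c := by
    rw [hcdef, Real.le_log_iff_exp_le (div_pos hZa hZb), le_div_iff₀ hZb]
    rw [Finset.mul_sum]
    apply Finset.sum_le_sum
    intro l _
    rw [← Real.exp_add]
    exact Real.exp_le_exp.2 (by have := hj1 l; linarith)
  have key : ∀ j, |smax a j - smax b j| ≤
      smax a j * ((a j0 - b j0) - c) + smax b j * (c - (a j1 - b j1)) := by
    intro j
    have hpq := smax_eq_mul_exp a b j
    rw [← hcdef] at hpq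
    set t := (a j - b j) - c with htdef
    have hq0 : 0 ≤ smax b j := smax_nonneg b j
    have hp0 : 0 ≤ smax a j := smax_nonneg a j
    have ht0 : t ≤ (a j0 - b j0) - c := by have := hj0 j; simp only [htdef]; linarith
    have ht1 : c - (a j1 - b j1) ≥ 0 := by linarith
    have hexp : 0 < Real.exp t := Real.exp_pos t
    rcases le_or_gt 0 t with ht | ht
    · have he1 : Real.exp t - 1 ≤ t * Real.exp t := by
        have h2 := Real.add_one_le_exp (-t)
        have h4 : Real.exp (-t) * Real.exp t = 1 := by
          rw [← Real.exp_add]; simp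
        nlinarith
      have hone : 1 ≤ Real.exp t := Real.one_le_exp ht
      rw [hpq, abs_of_nonneg (by nlinarith)]
      nlinarith [mul_nonneg hq0 ht1, mul_le_mul_of_nonneg_left ht0 (mul_nonneg hq0 hexp.le)]
    · have he1 : 1 - Real.exp t ≤ -t := by
        have h2 := Real.add_one_le_exp t
        linarith
      have hone : Real.exp t ≤ 1 := by
        calc Real.exp t ≤ Real.exp 0 := Real.exp_le_exp.2 ht.le
        _ = 1 := Real.exp_zero
      rw [hpq, abs_of_nonpos (by nlinarith)]
      have hc_j : c - (a j - b j) ≤ c - (a j1 - b j1) := by have := hj1 j; linarith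
      nlinarith [mul_nonneg (mul_nonneg hq0 hexp.le) (by linarith : (0:ℝ) ≤ (a j0 - b j0) - c),
        mul_le_mul_of_nonneg_left hc_j hq0, mul_le_mul_of_nonneg_left he1 hq0]
  have hsum : ∑ j, |smax a j - smax b j| ≤ (a j0 - b j0) - (a j1 - b j1) := by
    calc ∑ j, |smax a j - smax b j|
        ≤ ∑ j, (smax a j * ((a j0 - b j0) - c) + smax b j * (c - (a j1 - b j1))) :=
          Finset.sum_le_sum fun j _ => key j
      _ = (a j0 - b j0) - (a j1 - b j1) := by
          rw [Finset.sum_add_distrib, ← Finset.sum_mul, ← Finset.sum_mul, sum_smax, sum_smax]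
          ring
  refine hsum.trans ?_
  have hS : (0:ℝ) ≤ ∑ j, (a j - b j) ^ 2 := by positivity
  have hQ : ((a j0 - b j0) - (a j1 - b j1)) ^ 2 ≤ 2 * ∑ j, (a j - b j) ^ 2 := by
    by_cases h : j0 = j1
    · subst h; simp; positivity
    · have hpair : (a j0 - b j0) ^ 2 + (a j1 - b j1) ^ 2 ≤ ∑ j, (a j - b j) ^ 2 := by
        have := Finset.sum_le_sum_of_subset_of_nonneg (Finset.subset_univ {j0, j1})
          (fun i _ _ => sq_nonneg (a i - b i))
        rwa [Finset.sum_pair h] at this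
      nlinarith [sq_nonneg ((a j0 - b j0) + (a j1 - b j1))]
  have hnn : 0 ≤ (a j0 - b j0) - (a j1 - b j1) := by have := hj1 j0; linarith
  calc (a j0 - b j0) - (a j1 - b j1) = Real.sqrt (((a j0 - b j0) - (a j1 - b j1)) ^ 2) :=
        (Real.sqrt_sq hnn).symm
    _ ≤ Real.sqrt (2 * ∑ j, (a j - b j) ^ 2) := Real.sqrt_le_sqrt hQ
    _ = Real.sqrt 2 * Real.sqrt (∑ j, (a j - b j) ^ 2) := Real.sqrt_mul (by norm_num) _

lemma norm_sum_smax_sub_smul_le [Nonempty (Fin n)] (a b : Fin n → ℝ)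
    (y : Fin n → EuclideanSpace ℝ (Fin d)) {R : ℝ} (hR : 0 ≤ R) (hy : ∀ j, ‖y j‖ ≤ R) :
    ‖∑ j, (smax a j - smax b j) • y j‖ ≤
      Real.sqrt 2 * R * Real.sqrt (∑ j, (a j - b j) ^ 2) := by
  calc ‖∑ j, (smax a j - smax b j) • y j‖ ≤ ∑ j, |smax a j - smax b j| * R := by
        refine (norm_sum_le _ _).trans (Finset.sum_le_sum fun j _ => ?_)
        rw [norm_smul, Real.norm_eq_abs]
        exact mul_le_mul_of_nonneg_left (hy j) (abs_nonneg _)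
    _ = (∑ j, |smax a j - smax b j|) * R := by rw [Finset.sum_mul]
    _ ≤ (Real.sqrt 2 * Real.sqrt (∑ j, (a j - b j) ^ 2)) * R :=
        mul_le_mul_of_nonneg_right (gibbs_sum a b) hR
    _ = Real.sqrt 2 * R * Real.sqrt (∑ j, (a j - b j) ^ 2) := by ring

lemma norm_sum_smax_smul_le [Nonempty (Fin n)] (a : Fin n → ℝ)
    (z : Fin n → EuclideanSpace ℝ (Fin d)) :
    ‖∑ j, smax a j • z j‖ ≤ Real.sqrt (∑ j, ‖z j‖ ^ 2) := by
  have h1 : ‖∑ j, smax a j • z j‖ ≤ ∑ j, smax a j * ‖z j‖ := by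
    refine (norm_sum_le _ _).trans (Finset.sum_le_sum fun j _ => ?_)
    rw [norm_smul, Real.norm_eq_abs, abs_of_nonneg (smax_nonneg a j)]
  refine h1.trans ?_
  have h2 : (∑ j, smax a j * ‖z j‖) ^ 2 ≤ (∑ j, (smax a j) ^ 2) * ∑ j, ‖z j‖ ^ 2 :=
    Finset.sum_mul_sq_le_sq_mul_sq _ _ _
  have h3 : ∑ j, (smax a j) ^ 2 ≤ 1 := by
    calc ∑ j, (smax a j) ^ 2 ≤ ∑ j, smax a j :=
          Finset.sum_le_sum fun j _ => by nlinarith [smax_nonneg a j, smax_le_one a j]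
      _ = 1 := sum_smax a
  have h4 : 0 ≤ ∑ j, smax a j * ‖z j‖ :=
    Finset.sum_nonneg fun j _ => mul_nonneg (smax_nonneg a j) (norm_nonneg _)
  have h5 : (0:ℝ) ≤ ∑ j, ‖z j‖ ^ 2 := by positivity
  rw [← Real.sqrt_sq h4]
  apply Real.sqrt_le_sqrt
  nlinarith

lemma spec_nonneg {a b : ℕ} (M : Matrix (Fin a) (Fin b) ℝ) : 0 ≤ spec M := norm_nonneg _

lemma norm_mulVec_le {a b : ℕ} (M : Matrix (Fin a) (Fin b) ℝ) (v : EuclideanSpace ℝ (Fin b)) :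
    ‖toE (M.mulVec v)‖ ≤ spec M * ‖v‖ :=
  (LinearMap.toContinuousLinearMap (Matrix.toEuclideanLin M)).le_opNorm v

lemma abs_dot {d : ℕ} (u w : EuclideanSpace ℝ (Fin d)) :
    |(u : Fin d → ℝ) ⬝ᵥ (w : Fin d → ℝ)| ≤ ‖u‖ * ‖w‖ := by
  have h := abs_real_inner_le_norm u w
  have h2 : (inner ℝ u w : ℝ) = (u : Fin d → ℝ) ⬝ᵥ (w : Fin d → ℝ) := by
    simp [PiLp.inner_apply, RCLike.inner_apply, dotProduct, mul_comm]
  rwa [h2] at h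

lemma score_bound {d : ℕ} (A : Matrix (Fin d) (Fin d) ℝ) (u w : EuclideanSpace ℝ (Fin d)) :
    |(u : Fin d → ℝ) ⬝ᵥ Aᵀ.mulVec w| ≤ spec A * ‖u‖ * ‖w‖ := by
  have h1 : (u : Fin d → ℝ) ⬝ᵥ Aᵀ.mulVec w
      = (A.mulVec u : Fin d → ℝ) ⬝ᵥ (w : Fin d → ℝ) := by
    rw [Matrix.dotProduct_mulVec, Matrix.vecMul_transpose]
  rw [h1]
  calc |(A.mulVec u : Fin d → ℝ) ⬝ᵥ (w : Fin d → ℝ)|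
      ≤ ‖toE (A.mulVec u)‖ * ‖w‖ := abs_dot (toE (A.mulVec u)) w
    _ ≤ (spec A * ‖u‖) * ‖w‖ :=
        mul_le_mul_of_nonneg_right (norm_mulVec_le A u) (norm_nonneg _)
    _ = spec A * ‖u‖ * ‖w‖ := by ring

end Aux

set_option maxHeartbeats 1000000 in
/-- `Lip(f|_{B_R^n}) ≤ √3 ‖V‖₂ (‖A‖₂² R⁴ (4n + 1) + n)^{1/2}`. -/
theorem attn_lipschitz_on_ball {n d k : ℕ} (R : ℝ) (hR : 0 < R)
    (A : Matrix (Fin d) (Fin d) ℝ) (V : Matrix (Fin k) (Fin d) ℝ)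
    (X Y : PiLp 2 (fun _ : Fin n => EuclideanSpace ℝ (Fin d)))
    (hX : ∀ i, ‖X i‖ ≤ R) (hY : ∀ i, ‖Y i‖ ≤ R) :
    ‖attnF n d k A V X - attnF n d k A V Y‖ ≤
      Real.sqrt 3 * spec V *
        Real.sqrt (spec A ^ 2 * R ^ 4 * (4 * n + 1) + n) * ‖X - Y‖ := by
  have hRHS0 : 0 ≤ Real.sqrt 3 * spec V *
      Real.sqrt (spec A ^ 2 * R ^ 4 * (4 * n + 1) + n) * ‖X - Y‖ :=
    mul_nonneg (mul_nonneg (mul_nonneg (Real.sqrt_nonneg _) (spec_nonneg V))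
      (Real.sqrt_nonneg _)) (norm_nonneg _)
  rcases Nat.eq_zero_or_pos n with hn0 | hn0
  · have hzero : ‖attnF n d k A V X - attnF n d k A V Y‖ ^ 2 = 0 := by
      rw [PiLp.norm_sq_eq_of_L2]
      subst hn0
      simp
    have h0 : ‖attnF n d k A V X - attnF n d k A V Y‖ = 0 := by
      nlinarith [norm_nonneg (attnF n d k A V X - attnF n d k A V Y)]
    rw [h0]; exact hRHS0
  haveI : Nonempty (Fin n) := Fin.pos_iff_nonempty.mp hn0
  set sA := spec A with hsAdef
  set sV := spec V with hsVdef
  have hsA0 : 0 ≤ sA := spec_nonneg A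
  have hsV0 : 0 ≤ sV := spec_nonneg V
  set D := ‖X - Y‖ with hDdef
  have hD0 : 0 ≤ D := norm_nonneg _
  have hD2 : D ^ 2 = ∑ i, ‖X i - Y i‖ ^ 2 := by
    rw [hDdef, PiLp.norm_sq_eq_of_L2]
    exact Finset.sum_congr rfl fun i _ => by rw [PiLp.sub_apply]
  set aX : Fin n → Fin n → ℝ := fun i j => (X i : Fin d → ℝ) ⬝ᵥ (Aᵀ.mulVec (X j)) with haX
  set aM : Fin n → Fin n → ℝ := fun i j => (X i : Fin d → ℝ) ⬝ᵥ (Aᵀ.mulVec (Y j)) with haM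
  set aY : Fin n → Fin n → ℝ := fun i j => (Y i : Fin d → ℝ) ⬝ᵥ (Aᵀ.mulVec (Y j)) with haY
  set c2 := Real.sqrt 2 * R * (sA * R * D) with hc2def
  set c3 := Real.sqrt 2 * R * (sA * R * Real.sqrt n) with hc3def
  have hc20 : 0 ≤ c2 := by
    apply mul_nonneg (mul_nonneg (Real.sqrt_nonneg _) hR.le)
    exact mul_nonneg (mul_nonneg hsA0 hR.le) hD0
  have hc30 : 0 ≤ c3 := by
    apply mul_nonneg (mul_nonneg (Real.sqrt_nonneg _) hR.le)
    exact mul_nonneg (mul_nonneg hsA0 hR.le) (Real.sqrt_nonneg _)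
  -- pointwise bound
  have hi : ∀ i, ‖(attnF n d k A V X - attnF n d k A V Y) i‖ ≤
      sV * (D + c2 + c3 * ‖X i - Y i‖) := by
    intro i
    have e1 : (attnF n d k A V X - attnF n d k A V Y) i
        = toE (V.mulVec (((∑ j, smax (aX i) j • X j) : EuclideanSpace ℝ (Fin d))
            - ∑ j, smax (aY i) j • Y j)) := by
      have e0 : (attnF n d k A V X - attnF n d k A V Y) i
          = attnF n d k A V X i - attnF n d k A V Y i := rfl
      rw [e0]
      rw [Matrix.mulVec_sub, WithLp.ofLp_sum, WithLp.ofLp_sum]; simp only [WithLp.ofLp_smul]; rfl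
    have hsplit : ((∑ j, smax (aX i) j • X j) : EuclideanSpace ℝ (Fin d))
        - ∑ j, smax (aY i) j • Y j
        = (∑ j, smax (aX i) j • (X j - Y j))
          + (∑ j, (smax (aX i) j - smax (aM i) j) • Y j)
          + (∑ j, (smax (aM i) j - smax (aY i) j) • Y j) := by
      rw [← Finset.sum_add_distrib, ← Finset.sum_add_distrib, ← Finset.sum_sub_distrib]
      refine Finset.sum_congr rfl fun j _ => ?_
      rw [smul_sub, sub_smul, sub_smul]
      abel
    -- T1
    have hT1 : ‖∑ j, smax (aX i) j • (X j - Y j)‖ ≤ D := by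
      refine (norm_sum_smax_smul_le (aX i) (fun j => X j - Y j)).trans ?_
      rw [← hD2, Real.sqrt_sq hD0]
    -- T2
    have hq2 : Real.sqrt (∑ j, (aX i j - aM i j) ^ 2) ≤ sA * R * D := by
      have hb : ∀ j, (aX i j - aM i j) ^ 2 ≤ (sA * R) ^ 2 * ‖X j - Y j‖ ^ 2 := by
        intro j
        have h1 : aX i j - aM i j = (X i : Fin d → ℝ) ⬝ᵥ Aᵀ.mulVec (X j - Y j) := by
          rw [Matrix.mulVec_sub, dotProduct_sub]
        have h2 := score_bound A (X i) (X j - Y j)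
        rw [WithLp.ofLp_sub, ← h1, ← hsAdef] at h2
        have h3 : |aX i j - aM i j| ≤ sA * R * ‖X j - Y j‖ := by
          refine h2.trans ?_
          exact mul_le_mul_of_nonneg_right
            (mul_le_mul_of_nonneg_left (hX i) hsA0) (norm_nonneg _)
        calc (aX i j - aM i j) ^ 2 = |aX i j - aM i j| ^ 2 := (sq_abs _).symm
          _ ≤ (sA * R * ‖X j - Y j‖) ^ 2 := pow_le_pow_left₀ (abs_nonneg _) h3 2
          _ = (sA * R) ^ 2 * ‖X j - Y j‖ ^ 2 := by ring
      calc Real.sqrt (∑ j, (aX i j - aM i j) ^ 2)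
          ≤ Real.sqrt ((sA * R) ^ 2 * D ^ 2) := Real.sqrt_le_sqrt (by
            rw [hD2, Finset.mul_sum]; exact Finset.sum_le_sum fun j _ => hb j)
        _ = sA * R * D := by
            rw [show (sA * R) ^ 2 * D ^ 2 = (sA * R * D) ^ 2 by ring,
              Real.sqrt_sq (mul_nonneg (mul_nonneg hsA0 hR.le) hD0)]
    have hT2 : ‖∑ j, (smax (aX i) j - smax (aM i) j) • Y j‖ ≤ c2 := by
      refine (norm_sum_smax_sub_smul_le (aX i) (aM i) (fun j => Y j) hR.le hY).trans ?_
      rw [hc2def]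
      exact mul_le_mul_of_nonneg_left hq2 (mul_nonneg (Real.sqrt_nonneg _) hR.le)
    -- T3
    have hq3 : Real.sqrt (∑ j, (aM i j - aY i j) ^ 2) ≤ sA * R * (Real.sqrt n * ‖X i - Y i‖) := by
      have hb : ∀ j, (aM i j - aY i j) ^ 2 ≤ (sA * R) ^ 2 * ‖X i - Y i‖ ^ 2 := by
        intro j
        have h1 : aM i j - aY i j = ((X i - Y i : EuclideanSpace ℝ (Fin d)) : Fin d → ℝ)
            ⬝ᵥ Aᵀ.mulVec (Y j) := by
          rw [WithLp.ofLp_sub, sub_dotProduct]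
        have h2 := score_bound A (X i - Y i) (Y j)
        rw [← h1, ← hsAdef] at h2
        have h3 : |aM i j - aY i j| ≤ sA * R * ‖X i - Y i‖ := by
          refine h2.trans ?_
          calc sA * ‖X i - Y i‖ * ‖Y j‖ ≤ sA * ‖X i - Y i‖ * R :=
                mul_le_mul_of_nonneg_left (hY j) (mul_nonneg hsA0 (norm_nonneg _))
            _ = sA * R * ‖X i - Y i‖ := by ring
        calc (aM i j - aY i j) ^ 2 = |aM i j - aY i j| ^ 2 := (sq_abs _).symm
          _ ≤ (sA * R * ‖X i - Y i‖) ^ 2 := pow_le_pow_left₀ (abs_nonneg _) h3 2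
          _ = (sA * R) ^ 2 * ‖X i - Y i‖ ^ 2 := by ring
      calc Real.sqrt (∑ j, (aM i j - aY i j) ^ 2)
          ≤ Real.sqrt (n * ((sA * R) ^ 2 * ‖X i - Y i‖ ^ 2)) := Real.sqrt_le_sqrt (by
            calc ∑ j, (aM i j - aY i j) ^ 2 ≤ ∑ _j : Fin n, (sA * R) ^ 2 * ‖X i - Y i‖ ^ 2 :=
                  Finset.sum_le_sum fun j _ => hb j
              _ = n * ((sA * R) ^ 2 * ‖X i - Y i‖ ^ 2) := by
                  rw [Finset.sum_const, Finset.card_univ, Fintype.card_fin, nsmul_eq_mul])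
        _ = sA * R * (Real.sqrt n * ‖X i - Y i‖) := by
            rw [show (n : ℝ) * ((sA * R) ^ 2 * ‖X i - Y i‖ ^ 2)
                = (Real.sqrt n) ^ 2 * (sA * R * ‖X i - Y i‖) ^ 2 by
              rw [Real.sq_sqrt (Nat.cast_nonneg n)]; ring]
            rw [show (Real.sqrt n) ^ 2 * (sA * R * ‖X i - Y i‖) ^ 2
                = (sA * R * (Real.sqrt n * ‖X i - Y i‖)) ^ 2 by ring]
            exact Real.sqrt_sq (by positivity)
    have hT3 : ‖∑ j, (smax (aM i) j - smax (aY i) j) • Y j‖ ≤ c3 * ‖X i - Y i‖ := by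
      refine (norm_sum_smax_sub_smul_le (aM i) (aY i) (fun j => Y j) hR.le hY).trans ?_
      rw [hc3def]
      calc Real.sqrt 2 * R * Real.sqrt (∑ j, (aM i j - aY i j) ^ 2)
          ≤ Real.sqrt 2 * R * (sA * R * (Real.sqrt n * ‖X i - Y i‖)) :=
            mul_le_mul_of_nonneg_left hq3 (mul_nonneg (Real.sqrt_nonneg _) hR.le)
        _ = Real.sqrt 2 * R * (sA * R * Real.sqrt n) * ‖X i - Y i‖ := by ring
    rw [e1, ← WithLp.ofLp_sub, hsplit]
    calc ‖toE (V.mulVec ((∑ j, smax (aX i) j • (X j - Y j))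
            + (∑ j, (smax (aX i) j - smax (aM i) j) • Y j)
            + (∑ j, (smax (aM i) j - smax (aY i) j) • Y j)))‖
        ≤ sV * ‖(∑ j, smax (aX i) j • (X j - Y j))
            + (∑ j, (smax (aX i) j - smax (aM i) j) • Y j)
            + (∑ j, (smax (aM i) j - smax (aY i) j) • Y j)‖ := norm_mulVec_le V _
      _ ≤ sV * (D + c2 + c3 * ‖X i - Y i‖) := by
          refine mul_le_mul_of_nonneg_left ?_ hsV0
          calc ‖(∑ j, smax (aX i) j • (X j - Y j))
                + (∑ j, (smax (aX i) j - smax (aM i) j) • Y j)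
                + (∑ j, (smax (aM i) j - smax (aY i) j) • Y j)‖
              ≤ ‖(∑ j, smax (aX i) j • (X j - Y j))
                + (∑ j, (smax (aX i) j - smax (aM i) j) • Y j)‖
                + ‖∑ j, (smax (aM i) j - smax (aY i) j) • Y j‖ := norm_add_le _ _
            _ ≤ (‖∑ j, smax (aX i) j • (X j - Y j)‖
                + ‖∑ j, (smax (aX i) j - smax (aM i) j) • Y j‖)
                + ‖∑ j, (smax (aM i) j - smax (aY i) j) • Y j‖ := by
                  gcongr; exact norm_add_le _ _
            _ ≤ D + c2 + c3 * ‖X i - Y i‖ := by gcongr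
  -- sum over i
  clear_value sA sV D c2 c3
  have hsq : ‖attnF n d k A V X - attnF n d k A V Y‖ ^ 2
      ≤ ∑ i, (sV * (D + c2 + c3 * ‖X i - Y i‖)) ^ 2 := by
    rw [PiLp.norm_sq_eq_of_L2]
    exact Finset.sum_le_sum fun i _ => pow_le_pow_left₀ (norm_nonneg _) (hi i) 2
  have hterm : ∀ i : Fin n, (sV * (D + c2 + c3 * ‖X i - Y i‖)) ^ 2
      ≤ sV ^ 2 * (3 * D ^ 2 + 3 * c2 ^ 2 + 3 * (c3 ^ 2 * ‖X i - Y i‖ ^ 2)) := by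
    intro i
    clear hsq hi hRHS0 hD2 hc2def hc3def hDdef hsAdef hsVdef hX hY
    nlinarith [mul_nonneg (sq_nonneg sV) (sq_nonneg (D - c2)),
      mul_nonneg (sq_nonneg sV) (sq_nonneg (D - c3 * ‖X i - Y i‖)),
      mul_nonneg (sq_nonneg sV) (sq_nonneg (c2 - c3 * ‖X i - Y i‖))]
  have hsum2 : ∑ i, (sV * (D + c2 + c3 * ‖X i - Y i‖)) ^ 2
      ≤ sV ^ 2 * (3 * n * D ^ 2 + 3 * n * c2 ^ 2 + 3 * (c3 ^ 2 * D ^ 2)) := by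
    calc ∑ i, (sV * (D + c2 + c3 * ‖X i - Y i‖)) ^ 2
        ≤ ∑ i, sV ^ 2 * (3 * D ^ 2 + 3 * c2 ^ 2 + 3 * (c3 ^ 2 * ‖X i - Y i‖ ^ 2)) :=
          Finset.sum_le_sum fun i _ => hterm i
      _ = sV ^ 2 * (3 * n * D ^ 2 + 3 * n * c2 ^ 2 + 3 * (c3 ^ 2 * D ^ 2)) := by
          rw [← Finset.mul_sum]
          congr 1
          rw [Finset.sum_add_distrib, Finset.sum_add_distrib, Finset.sum_const,
            Finset.sum_const, Finset.card_univ, Fintype.card_fin, ← Finset.mul_sum,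
            ← Finset.mul_sum, ← hD2, nsmul_eq_mul, nsmul_eq_mul]
          ring
  -- compute c2^2, c3^2
  have h2sq : Real.sqrt 2 ^ 2 = 2 := Real.sq_sqrt (by norm_num)
  have hnsq : Real.sqrt n ^ 2 = n := Real.sq_sqrt (Nat.cast_nonneg n)
  have hc2sq : c2 ^ 2 = 2 * sA ^ 2 * R ^ 4 * D ^ 2 := by
    rw [hc2def]; rw [show (Real.sqrt 2 * R * (sA * R * D)) ^ 2
      = Real.sqrt 2 ^ 2 * (R ^ 2 * (sA ^ 2 * R ^ 2 * D ^ 2)) by ring, h2sq]; ring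
  have hc3sq : c3 ^ 2 = 2 * sA ^ 2 * R ^ 4 * n := by
    rw [hc3def]; rw [show (Real.sqrt 2 * R * (sA * R * Real.sqrt n)) ^ 2
      = Real.sqrt 2 ^ 2 * (R ^ 2 * (sA ^ 2 * R ^ 2 * Real.sqrt n ^ 2)) by ring, h2sq, hnsq]
    ring
  have hfin2 : ‖attnF n d k A V X - attnF n d k A V Y‖ ^ 2
      ≤ (Real.sqrt 3 * sV * Real.sqrt (sA ^ 2 * R ^ 4 * (4 * n + 1) + n) * D) ^ 2 := by
    have hrhs : (Real.sqrt 3 * sV * Real.sqrt (sA ^ 2 * R ^ 4 * (4 * n + 1) + n) * D) ^ 2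
        = 3 * sV ^ 2 * ((sA ^ 2 * R ^ 4 * (4 * n + 1) + n) * D ^ 2) := by
      rw [show (Real.sqrt 3 * sV * Real.sqrt (sA ^ 2 * R ^ 4 * (4 * n + 1) + n) * D) ^ 2
          = Real.sqrt 3 ^ 2 * (Real.sqrt (sA ^ 2 * R ^ 4 * (4 * n + 1) + n)) ^ 2
            * (sV ^ 2 * D ^ 2) by ring,
        Real.sq_sqrt (by norm_num : (0:ℝ) ≤ 3), Real.sq_sqrt (by positivity)]
      ring
    rw [hrhs]
    refine (hsq.trans hsum2).trans ?_
    rw [hc2sq, hc3sq]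
    have hkey : (0:ℝ) ≤ sA ^ 2 * R ^ 4 * D ^ 2 := by positivity
    nlinarith [sq_nonneg sV, mul_nonneg (sq_nonneg sV) hkey]
  calc ‖attnF n d k A V X - attnF n d k A V Y‖
      = Real.sqrt (‖attnF n d k A V X - attnF n d k A V Y‖ ^ 2) :=
        (Real.sqrt_sq (norm_nonneg _)).symm
    _ ≤ Real.sqrt ((Real.sqrt 3 * sV * Real.sqrt (sA ^ 2 * R ^ 4 * (4 * n + 1) + n) * D) ^ 2) :=
        Real.sqrt_le_sqrt hfin2
    _ = Real.sqrt 3 * sV * Real.sqrt (sA ^ 2 * R ^ 4 * (4 * n + 1) + n) * D := by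
        rw [Real.sqrt_sq hRHS0]
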